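/- Let q be an odd prime, let ℓ ≥ 1 be an integer with 2^ℓ < q/2, and let s be the unique integer in [−q/2, q/2) with s·2^ℓ ≡ 1 (mod q). Then for every integer m with |⌊m/2^ℓ⌉| < q/2, one has (s·(m − (m mod 2^ℓ))) mod q = ⌊m/2^ℓ⌉, where all residues are centered residues. -/

import Mathlib

/-- The centered residue of `a` modulo `q`: `a mod q := a - ⌊(a + q/2)/q⌋ * q`,
the unique integer in `[-q/2, q/2)` congruent to `a` modulo `q`. -/
def cmod (a q : ℤ) : ℤ := a - ⌊((a : ℚ) + (q : ℚ) / 2) / (q : ℚ)⌋ * q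

lemma cmod_modEq (a q : ℤ) : cmod a q ≡ a [ZMOD q] := by
  have : q ∣ a - cmod a q := ⟨⌊((a : ℚ) + (q : ℚ) / 2) / (q : ℚ)⌋, by unfold cmod; ring⟩
  exact Int.modEq_iff_dvd.mpr this

lemma cmod_bounds (a q : ℤ) (hq : 0 < q) :
    -(q:ℚ)/2 ≤ (cmod a q : ℚ) ∧ (cmod a q : ℚ) < (q:ℚ)/2 := by
  have hq' : (0:ℚ) < (q:ℚ) := by exact_mod_cast hq
  set n := ⌊((a : ℚ) + (q : ℚ) / 2) / (q : ℚ)⌋ with hn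
  have h1 : (n:ℚ) * q ≤ (a : ℚ) + (q:ℚ)/2 := (le_div_iff₀ hq').mp (Int.floor_le _)
  have h2 : (a : ℚ) + (q:ℚ)/2 < ((n:ℚ) + 1) * q := (div_lt_iff₀ hq').mp (Int.lt_floor_add_one _)
  have hc : (cmod a q : ℚ) = (a:ℚ) - (n:ℚ) * q := by unfold cmod; push_cast; ring
  constructor <;> rw [hc] <;> nlinarith

lemma cmod_unique (q x y : ℤ) (h : x ≡ y [ZMOD q])
    (hx1 : -(q:ℚ)/2 ≤ (x:ℚ)) (hx2 : (x:ℚ) < (q:ℚ)/2)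
    (hy1 : -(q:ℚ)/2 ≤ (y:ℚ)) (hy2 : (y:ℚ) < (q:ℚ)/2) : x = y := by
  have hd : q ∣ y - x := Int.ModEq.dvd h
  have habs : |((y - x : ℤ) : ℚ)| < (q:ℚ) := by
    rw [abs_lt]; push_cast; constructor <;> linarith
  have habs' : |y - x| < q := by exact_mod_cast (by rwa [← Int.cast_abs] at habs : ((|y-x| : ℤ):ℚ) < (q:ℚ))
  have := Int.eq_zero_of_abs_lt_dvd hd habs'
  omega

/-- Let `q` be an odd prime, `ℓ ≥ 1` with `2^ℓ < q/2`, and let `s` be the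
(unique) integer in `[−q/2, q/2)` with `s·2^ℓ ≡ 1 (mod q)`.  Then for every integer `m`
with `|⌊m/2^ℓ⌉| < q/2`, one has `(s·(m − (m mod 2^ℓ))) mod q = ⌊m/2^ℓ⌉`,
where all residues are centered residues. -/
theorem stmt_1 (q : ℤ) (hq : Prime q) (hodd : Odd q)
    (ℓ : ℕ) (hℓ : 1 ≤ ℓ) (hℓq : (2 : ℚ) ^ ℓ < (q : ℚ) / 2)
    (s : ℤ) (hs_lb : -(q : ℚ) / 2 ≤ (s : ℚ)) (hs_ub : (s : ℚ) < (q : ℚ) / 2)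
    (hs_inv : s * 2 ^ ℓ ≡ 1 [ZMOD q])
    (m : ℤ) (hm : |(round ((m : ℚ) / 2 ^ ℓ) : ℚ)| < (q : ℚ) / 2) :
    cmod (s * (m - cmod m (2 ^ ℓ))) q = round ((m : ℚ) / 2 ^ ℓ) := by
  have h2pos : (0:ℚ) < (2:ℚ)^ℓ := by positivity
  have hq2 : (0:ℚ) < (q:ℚ) := by linarith
  have hqpos : 0 < q := by exact_mod_cast hq2
  set t : ℤ := 2 ^ ℓ with hT
  set k : ℤ := round ((m : ℚ) / 2 ^ ℓ) with hK
  have htq : ((t:ℤ):ℚ) = (2:ℚ)^ℓ := by rw [hT]; push_cast; ring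
  -- m - cmod m t = k * t
  have hk : m - cmod m t = k * t := by
    have harg : ((m : ℚ) + (t : ℚ)/2)/(t:ℚ) = (m : ℚ) / 2 ^ ℓ + 1/2 := by
      rw [htq]; field_simp
    have hkf : k = ⌊((m : ℚ) + (t : ℚ)/2)/(t:ℚ)⌋ := by
      rw [hK, round_eq, harg]
    unfold cmod
    rw [← hkf]
    ring
  -- congruence
  have hcong : s * (m - cmod m t) ≡ k [ZMOD q] := by
    rw [hk]
    calc s * (k * t) = (s * t) * k := by ring
      _ ≡ 1 * k [ZMOD q] := Int.ModEq.mul_right k hs_inv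
      _ = k := by ring
  have hb := cmod_bounds (s * (m - cmod m t)) q hqpos
  have hkb := abs_lt.mp hm
  exact cmod_unique q _ k ((cmod_modEq _ q).trans hcong) hb.1 hb.2 (by push_cast; linarith [hkb.1]) hkb.2
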